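/- Let G be a finite group, τ an automorphism of G with τ² = 1, and K ⊆ G with 1 ∈ K, k^τ = k⁻¹ for all k ∈ K, and ⟨K⟩ = G. Form the semidirect product G⟨τ⟩ and set Λ = τK. If Λ is invariant under conjugation by G, then K is a twisted subgroup of G. -/
import Mathlib


/-- Let `G` be a finite group sitting (as a subgroup) inside the
semidirect product `P = G⟨t⟩`, where `t² = 1` and conjugation by `t` induces an
automorphism `τ` of `G`. Let `K ⊆ G` with `1 ∈ K`, `k^τ = k⁻¹` for all `k ∈ K`,
and `⟨K⟩ = G`. Set `Λ = tK ⊆ P`. If `Λ` is invariant under conjugation by `G`,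
then `K` is a twisted subgroup of `G`, i.e. `x⁻¹ ∈ K` and `x*y*x ∈ K` for all
`x, y ∈ K`. -/
theorem twisted_of_lambda_invariant {P : Type*} [Group P] [Finite P]
    (G : Subgroup P) (t : P) (ht : t ^ 2 = 1)
    (htG : ∀ g ∈ G, t * g * t⁻¹ ∈ G)
    (hP : Subgroup.closure ((G : Set P) ∪ {t}) = ⊤)
    (K : Set P) (hKG : K ⊆ (G : Set P))
    (h1 : (1 : P) ∈ K)
    (hinv : ∀ k ∈ K, t * k * t⁻¹ = k⁻¹)
    (hgen : Subgroup.closure K = G)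
    (hLambda : ∀ g ∈ G, ∀ k ∈ K, g⁻¹ * (t * k) * g ∈ (fun x => t * x) '' K) :
    (∀ x ∈ K, x⁻¹ ∈ K) ∧ (∀ x ∈ K, ∀ y ∈ K, x * y * x ∈ K) := by
  have htt : t * t = 1 := by rw [← pow_two]; exact ht
  have ht' : t⁻¹ = t := inv_eq_of_mul_eq_one_right htt
  have hmul : ∀ x ∈ K, ∀ y ∈ K, x * y * x ∈ K := by
    intro x hx y hy
    obtain ⟨z, hz, hze⟩ := hLambda x (hKG hx) y hy
    simp only at hze
    have hxt : x⁻¹ * t = t * x := by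
      have h := hinv x hx
      rw [ht'] at h
      rw [← h, mul_assoc, htt, mul_one]
    have key : t * z = t * (x * y * x) := by
      rw [hze, show x⁻¹ * (t * y) * x = (x⁻¹ * t) * (y * x) by group, hxt]
      group
    have := mul_left_cancel key
    rw [← this]; exact hz
  refine ⟨?_, hmul⟩
  have hpow : ∀ n : ℕ, ∀ x ∈ K, x ^ (n + 1) ∈ K := by
    intro n
    induction n using Nat.strong_induction_on with
    | _ n ih =>
      intro x hx
      match n with
      | 0 => simpa using hx
      | 1 =>
        have := hmul x hx 1 h1
        simpa [pow_two] using this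
      | (m + 2) =>
        have h' : x ^ (m + 1) ∈ K := ih m (by omega) x hx
        have := hmul x hx _ h'
        have heq : x * x ^ (m + 1) * x = x ^ (m + 3) := by
          rw [← pow_succ' x (m + 1), ← pow_succ]
        rwa [heq] at this
  intro x hx
  rcases Nat.lt_or_ge (orderOf x) 2 with h | h
  · interval_cases h' : orderOf x
    · exact absurd h' (orderOf_pos x).ne'
    · have : x = 1 := orderOf_eq_one_iff.mp h'
      simpa [this] using h1
  · obtain ⟨m, hm⟩ : ∃ m, orderOf x = m + 2 := ⟨orderOf x - 2, by omega⟩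
    have hx1 : x * x ^ (m + 1) = 1 := by
      rw [← pow_succ', ← hm]; exact pow_orderOf_eq_one x
    rw [inv_eq_of_mul_eq_one_right hx1]
    exact hpow m x hx
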